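/- arXiv:2409.03382 — 5 statements merged into one kernel-verified Lean document; each statement's English description precedes it below -/
import Mathlib

section
/- Let S_n(x) be binomial(n,x) with 0 < x < 1 and λ = nx. Then E[(S_n(x)-nx)/(S_n(x)+1)] = -((1-x)/((n+1)x))·(1 - (λ+1)·P(S_n(x)=0)). -/
lemma binom_sum_one (n : ℕ) (x : ℝ) :
    ∑ k ∈ Finset.range (n + 1), (n.choose k : ℝ) * x ^ k * (1 - x) ^ (n - k) = 1 := by
  have h := add_pow x (1 - x) n
  simp only [add_sub_cancel, one_pow] at h
  conv_rhs => rw [h]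
  exact Finset.sum_congr rfl fun k _ => by ring

lemma binom_inv_sum (n : ℕ) (x : ℝ) (hx0 : 0 < x) :
    ∑ k ∈ Finset.range (n + 1), (n.choose k : ℝ) * x ^ k * (1 - x) ^ (n - k) / (k + 1)
      = (1 - (1 - x) ^ (n + 1)) / (((n : ℝ) + 1) * x) := by
  have hne : ((n : ℝ) + 1) * x ≠ 0 := by positivity
  rw [eq_div_iff hne, Finset.sum_mul]
  have key : ∀ k ∈ Finset.range (n + 1),
      (n.choose k : ℝ) * x ^ k * (1 - x) ^ (n - k) / (k + 1) * (((n : ℝ) + 1) * x)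
      = ((n + 1).choose (k + 1) : ℝ) * x ^ (k + 1) * (1 - x) ^ ((n + 1) - (k + 1)) := by
    intro k hk
    have hc : ((n : ℝ) + 1) * (n.choose k : ℝ) = ((n + 1).choose (k + 1) : ℝ) * ((k : ℝ) + 1) := by
      have := Nat.add_one_mul_choose_eq n k
      exact_mod_cast congrArg (Nat.cast : ℕ → ℝ) this
    have hk1 : ((k : ℝ) + 1) ≠ 0 := by positivity
    have hsub : (n + 1) - (k + 1) = n - k := by omega
    rw [hsub]
    field_simp
    linear_combination (x ^ (k + 1) * (1 - x) ^ (n - k)) * hc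
  rw [Finset.sum_congr rfl key]
  have h2 := binom_sum_one (n + 1) x
  rw [Finset.sum_range_succ' _ (n + 1)] at h2
  simp only [Nat.choose_zero_right, Nat.cast_one, pow_zero, Nat.sub_zero, one_mul, mul_one] at h2
  linarith

/-- For S_n(x) binomial(n,x), 0 < x < 1, λ = nx:
E[(S_n(x)-nx)/(S_n(x)+1)] = -((1-x)/((n+1)x))·(1 - (λ+1)P(S_n(x)=0)). -/
theorem binomial_centered_inv_moment (n : ℕ) (x : ℝ) (hx0 : 0 < x) (hx1 : x < 1) :
    ∑ k ∈ Finset.range (n + 1),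
        (((k : ℝ) - n * x) / ((k : ℝ) + 1)) *
          ((n.choose k : ℝ) * x ^ k * (1 - x) ^ (n - k))
      = -((1 - x) / (((n : ℝ) + 1) * x)) * (1 - ((n : ℝ) * x + 1) * (1 - x) ^ n) := by
  have split : ∀ k ∈ Finset.range (n + 1),
      (((k : ℝ) - n * x) / ((k : ℝ) + 1)) *
          ((n.choose k : ℝ) * x ^ k * (1 - x) ^ (n - k))
      = (n.choose k : ℝ) * x ^ k * (1 - x) ^ (n - k)
        - ((n : ℝ) * x + 1) * ((n.choose k : ℝ) * x ^ k * (1 - x) ^ (n - k) / (k + 1)) := by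
    intro k _
    have hk1 : ((k : ℝ) + 1) ≠ 0 := by positivity
    field_simp
    ring
  rw [Finset.sum_congr rfl split, Finset.sum_sub_distrib, ← Finset.mul_sum,
    binom_sum_one, binom_inv_sum n x hx0]
  have hne : ((n : ℝ) + 1) * x ≠ 0 := by positivity
  have hp : (1 - x) ^ (n + 1) = (1 - x) ^ n * (1 - x) := pow_succ _ _
  field_simp
  linear_combination ((n : ℝ) * x + 1) * hp
end

section
/- Let S_n(x) be binomial(n,x) with 0 < x < 1 and λ = nx. Then E[(S_n(x)-nx)_+/(S_n(x)+1)] = ((1-x)/((n+1)x))·(λ·P(S_n(x)=⌈λ⌉) - P(S_n(x) ≥ ⌈λ⌉+1)), where y_+ = max(y,0) and ⌈λ⌉ is the ceiling of λ. -/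
private lemma binom_rec (n m : ℕ) (x : ℝ) (hm : m + 1 ≤ n) :
    ((m : ℝ) + 1) * (1 - x) * ((n.choose (m+1) : ℝ) * x ^ (m+1) * (1 - x) ^ (n - (m+1)))
    = ((n : ℝ) - (m : ℝ)) * x * ((n.choose m : ℝ) * x ^ m * (1 - x) ^ (n - m)) := by
  have hcast : ((n.choose (m+1) * (m+1) : ℕ) : ℝ) = ((n.choose m * (n - m) : ℕ) : ℝ) := by
    rw [Nat.choose_succ_right_eq]
  have hnm : n - (m+1) + 1 = n - m := by omega
  have hpow : (1 - x) ^ (n - m) = (1 - x) ^ (n - (m+1)) * (1 - x) := by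
    rw [← pow_succ, hnm]
  push_cast [Nat.cast_sub (by omega : m ≤ n)] at hcast
  rw [hpow]
  linear_combination x ^ (m+1) * (1 - x) ^ (n - (m+1)) * (1 - x) * hcast

private lemma key (n : ℕ) (x : ℝ) (hx0 : 0 < x) (hx1 : x < 1) :
    ∀ d m : ℕ, m + d = n →
    ∑ k ∈ Finset.Icc m n, (((k:ℝ) - n*x)/((k:ℝ)+1)) *
        ((n.choose k : ℝ) * x ^ k * (1 - x) ^ (n - k))
      = ((1-x)/(((n:ℝ)+1)*x)) * (((n:ℝ)*x+1) *
          ((n.choose m : ℝ) * x ^ m * (1 - x) ^ (n - m))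
          - ∑ k ∈ Finset.Icc m n, ((n.choose k : ℝ) * x ^ k * (1 - x) ^ (n - k))) := by
  have hx : x ≠ 0 := ne_of_gt hx0
  have hx1' : 1 - x ≠ 0 := by linarith
  have hn1 : (n : ℝ) + 1 ≠ 0 := by positivity
  intro d
  induction d with
  | zero =>
    intro m hm
    have hmn : m = n := by omega
    subst hmn
    simp only [Finset.Icc_self, Finset.sum_singleton, Nat.choose_self, Nat.cast_one,
      Nat.sub_self, pow_zero]
    field_simp
    ring
  | succ d ih =>
    intro m hm
    have h1 : m + 1 ≤ n := by omega
    have hmn : m ≤ n := by omega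
    have hicc : Finset.Icc m n = insert m (Finset.Icc (m+1) n) := by
      rw [Finset.Icc_add_one_left_eq_Ioc, Finset.Ioc_insert_left hmn]
    have hnotmem : m ∉ Finset.Icc (m+1) n := by simp
    rw [hicc, Finset.sum_insert hnotmem, Finset.sum_insert hnotmem, ih (m+1) (by omega)]
    have hrec := binom_rec n m x h1
    set u := (n.choose m : ℝ) * x ^ m * (1 - x) ^ (n - m) with hu
    set v := (n.choose (m+1) : ℝ) * x ^ (m+1) * (1 - x) ^ (n - (m+1)) with hv
    set S := ∑ k ∈ Finset.Icc (m+1) n, ((n.choose k : ℝ) * x ^ k * (1 - x) ^ (n - k)) with hS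
    have hm1 : (m : ℝ) + 1 ≠ 0 := by positivity
    field_simp
    linear_combination ((n:ℝ)*x + 1) * hrec

/-- For S_n(x) binomial(n,x), 0 < x < 1, λ = nx:
E[(S_n(x)-nx)₊/(S_n(x)+1)]
  = ((1-x)/((n+1)x))·(λ·P(S_n(x)=⌈λ⌉) - P(S_n(x) ≥ ⌈λ⌉+1)). -/
theorem binomial_positive_part_inv_moment (n : ℕ) (x : ℝ) (hx0 : 0 < x) (hx1 : x < 1) :
    ∑ k ∈ Finset.range (n + 1),
        (max ((k : ℝ) - n * x) 0 / ((k : ℝ) + 1)) *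
          ((n.choose k : ℝ) * x ^ k * (1 - x) ^ (n - k))
      = ((1 - x) / (((n : ℝ) + 1) * x)) *
          ((n : ℝ) * x *
              ((n.choose ⌈(n : ℝ) * x⌉₊ : ℝ) * x ^ ⌈(n : ℝ) * x⌉₊
                * (1 - x) ^ (n - ⌈(n : ℝ) * x⌉₊))
            - ∑ k ∈ Finset.Icc (⌈(n : ℝ) * x⌉₊ + 1) n,
                (n.choose k : ℝ) * x ^ k * (1 - x) ^ (n - k)) := by
  set m := ⌈(n : ℝ) * x⌉₊ with hm
  have hmn : m ≤ n := Nat.ceil_le.mpr (by nlinarith [Nat.cast_nonneg (α := ℝ) n])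
  have hsub : Finset.Icc m n ⊆ Finset.range (n+1) := by
    intro k hk; simp only [Finset.mem_Icc] at hk; simp; omega
  have h1 : ∑ k ∈ Finset.range (n + 1),
        (max ((k : ℝ) - n * x) 0 / ((k : ℝ) + 1)) *
          ((n.choose k : ℝ) * x ^ k * (1 - x) ^ (n - k))
      = ∑ k ∈ Finset.Icc m n, (((k:ℝ) - n*x)/((k:ℝ)+1)) *
          ((n.choose k : ℝ) * x ^ k * (1 - x) ^ (n - k)) := by
    rw [← Finset.sum_subset hsub]
    · apply Finset.sum_congr rfl
      intro k hk
      simp only [Finset.mem_Icc] at hk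
      have : (n : ℝ) * x ≤ k := Nat.ceil_le.mp hk.1
      rw [max_eq_left (by linarith)]
    · intro k hk hk'
      simp only [Finset.mem_Icc, not_and, not_le] at hk'
      have hkn : k < n + 1 := Finset.mem_range.mp hk
      have hkm : k < m := by
        by_contra h
        push_neg at h
        have := hk' h
        omega
      have : (k : ℝ) < n * x := Nat.lt_ceil.mp hkm
      rw [max_eq_right (by linarith), zero_div, zero_mul]
  rw [h1, key n x hx0 hx1 (n - m) m (by omega)]
  have hicc : Finset.Icc m n = insert m (Finset.Icc (m+1) n) := by
    rw [Finset.Icc_add_one_left_eq_Ioc, Finset.Ioc_insert_left hmn]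
  have hnotmem : m ∉ Finset.Icc (m+1) n := by simp
  rw [hicc, Finset.sum_insert hnotmem]
  ring
end

section
/- For m = 1,…,n-1, the probability that a binomial(n, m/n) random variable equals m satisfies P(S_n(m/n)=m) = C(n,m)(m/n)^m(1-m/n)^{n-m} ≤ (1/√(2π))·√(n/(m(n-m))). -/
open Stirling Real Filter Nat Topology

lemma sqrtpi_le_stirlingSeq (n : ℕ) : Real.sqrt π ≤ stirlingSeq (n + 1) := by
  refine Antitone.le_of_tendsto stirlingSeq'_antitone ?_ n
  exact tendsto_stirlingSeq_sqrt_pi.comp (tendsto_add_atTop_nat 1)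

lemma diff_le (k : ℕ) : Real.log (stirlingSeq (k + 1)) - Real.log (stirlingSeq (k + 2))
    ≤ 1 / (4 * ((k:ℝ) + 1) * ((k:ℝ) + 2)) := by
  refine (log_stirlingSeq_diff_le_geo_sum k).trans_eq ?_
  have h : (0:ℝ) < 1 - (1 / (2 * ((k:ℝ) + 1) + 1)) ^ 2 := by
    have : (1 / (2 * ((k:ℝ) + 1) + 1)) ^ 2 < 1 := by
      rw [sq_lt_one_iff_abs_lt_one, abs_of_pos (by positivity)]
      rw [div_lt_one (by positivity)]
      nlinarith [Nat.cast_nonneg (α := ℝ) k]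
    linarith
  push_cast
  rw [div_eq_div_iff h.ne' (by positivity : (4 * ((k:ℝ) + 1) * ((k:ℝ) + 2)) ≠ 0)]
  field_simp
  ring

lemma diff_ge (k : ℕ) : 1 / (3 * (2 * ((k:ℝ) + 1) + 1) ^ 2)
    ≤ Real.log (stirlingSeq (k + 1)) - Real.log (stirlingSeq (k + 2)) := by
  have h := le_hasSum (log_stirlingSeq_diff_hasSum k) 0 (fun j _ => by positivity)
  refine le_trans (le_of_eq ?_) h
  push_cast
  rw [pow_one, div_pow, one_pow, mul_one_div, div_div]
  norm_num

lemma tele_le (N : ℕ) : ∀ j : ℕ, Real.log (stirlingSeq (N + 1)) - Real.log (stirlingSeq (N + 1 + j))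
    ≤ 1/4 * (1/((N:ℝ)+1) - 1/((N:ℝ)+1+j)) := by
  intro j
  induction j with
  | zero => simp
  | succ j ih =>
    have h := diff_le (N + j)
    have e1 : N + j + 1 = N + 1 + j := by omega
    have e2 : N + j + 2 = N + 1 + (j + 1) := by omega
    rw [e1, e2] at h
    push_cast at h ⊢
    have hp1 : (0:ℝ) < (N:ℝ) + (j:ℝ) + 1 := by positivity
    have hp2 : (0:ℝ) < (N:ℝ) + (j:ℝ) + 2 := by positivity
    have key : 1 / (4 * ((N:ℝ) + (j:ℝ) + 1) * ((N:ℝ) + (j:ℝ) + 2))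
        = 1/4 * (1/((N:ℝ)+1+j) - 1/((N:ℝ)+1+(j+1))) := by
      field_simp
      ring
    linarith

lemma tele_ge (N : ℕ) : ∀ j : ℕ, 1/12 * (1/((N:ℝ)+3/2) - 1/((N:ℝ)+3/2+j))
    ≤ Real.log (stirlingSeq (N + 1)) - Real.log (stirlingSeq (N + 1 + j)) := by
  intro j
  induction j with
  | zero => simp
  | succ j ih =>
    have h := diff_ge (N + j)
    have e1 : N + j + 1 = N + 1 + j := by omega
    have e2 : N + j + 2 = N + 1 + (j + 1) := by omega
    rw [e1, e2] at h
    push_cast at h ⊢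
    have hp1 : (0:ℝ) < (N:ℝ) + (j:ℝ) + 3/2 := by positivity
    have hp2 : (0:ℝ) < (N:ℝ) + (j:ℝ) + 5/2 := by positivity
    have key : 1/12 * (1/((N:ℝ)+(j:ℝ)+3/2) - 1/((N:ℝ)+(j:ℝ)+5/2))
        ≤ 1 / (3 * (2 * ((N:ℝ) + (j:ℝ) + 1) + 1) ^ 2) := by
      have e4 : 1/12 * (1/((N:ℝ)+(j:ℝ)+3/2) - 1/((N:ℝ)+(j:ℝ)+5/2))
          = 1 / (12 * (((N:ℝ)+(j:ℝ)+3/2) * ((N:ℝ)+(j:ℝ)+5/2))) := by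
        field_simp
        ring
      rw [e4]
      refine one_div_le_one_div_of_le (by positivity) (by nlinarith)
    have e3 : 1/12 * (1/((N:ℝ)+3/2) - 1/((N:ℝ)+3/2+((j:ℝ)+1)))
        = 1/12 * (1/((N:ℝ)+3/2) - 1/((N:ℝ)+3/2+j))
          + 1/12 * (1/((N:ℝ)+(j:ℝ)+3/2) - 1/((N:ℝ)+(j:ℝ)+5/2)) := by
      have hq1 : (0:ℝ) < (N:ℝ) + 3/2 := by positivity
      field_simp
      ring
    linarith

lemma tendsto_log_s (N : ℕ) :
    Tendsto (fun j : ℕ => Real.log (stirlingSeq (N + 1 + j))) atTop (𝓝 (Real.log (Real.sqrt π))) := by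
  have h : Tendsto (fun j : ℕ => stirlingSeq (N + 1 + j)) atTop (𝓝 (Real.sqrt π)) :=
    (tendsto_stirlingSeq_sqrt_pi.comp (tendsto_add_atTop_nat (N+1))).congr
      (fun j => by simp [Function.comp, Nat.add_comm])
  exact h.log (by positivity)

lemma log_s_upper (N : ℕ) :
    Real.log (stirlingSeq (N + 1)) ≤ Real.log (Real.sqrt π) + 1/(4*((N:ℝ)+1)) := by
  have hb : ∀ j : ℕ, Real.log (stirlingSeq (N + 1)) - 1/(4*((N:ℝ)+1))
      ≤ Real.log (stirlingSeq (N + 1 + j)) := by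
    intro j
    have h := tele_le N j
    have : (0:ℝ) ≤ 1/((N:ℝ)+1+j) := by positivity
    have e : 1/4 * (1/((N:ℝ)+1)) = 1/(4*((N:ℝ)+1)) := by
      field_simp
    nlinarith
  have := ge_of_tendsto' (tendsto_log_s N) hb
  linarith

lemma log_s_lower (N : ℕ) :
    Real.log (Real.sqrt π) + 1/(12*((N:ℝ)+3/2)) ≤ Real.log (stirlingSeq (N + 1)) := by
  have h1 : Tendsto (fun j : ℕ => 1/12 * (1/((N:ℝ)+3/2) - 1/((N:ℝ)+3/2+j))) atTop
      (𝓝 (1/12 * (1/((N:ℝ)+3/2) - 0))) := by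
    refine Tendsto.const_mul _ (Tendsto.const_sub _ ?_)
    simp only [one_div]
    refine Tendsto.inv_tendsto_atTop ?_
    exact tendsto_atTop_add_const_left _ _ tendsto_natCast_atTop_atTop
  have h2 : Tendsto (fun j : ℕ => Real.log (stirlingSeq (N + 1)) - Real.log (stirlingSeq (N + 1 + j)))
      atTop (𝓝 (Real.log (stirlingSeq (N + 1)) - Real.log (Real.sqrt π))) :=
    Tendsto.const_sub _ (tendsto_log_s N)
  have := le_of_tendsto_of_tendsto' h1 h2 (tele_ge N)
  have e : 1/12 * (1/((N:ℝ)+3/2) - 0) = 1/(12*((N:ℝ)+3/2)) := by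
    field_simp
    ring
  linarith [e ▸ this]

lemma stirling_fact_le (n : ℕ) (hn : 1 ≤ n) :
    (n ! : ℝ) ≤ Real.exp (1/(4*(n:ℝ))) * (Real.sqrt (2*π*n) * ((n:ℝ)/Real.exp 1)^n) := by
  obtain ⟨N, rfl⟩ : ∃ N, n = N + 1 := ⟨n - 1, by omega⟩
  have hA : (0:ℝ) < Real.sqrt (2 * (N+1) : ℝ) * (((N+1:ℕ):ℝ) / Real.exp 1) ^ (N+1) := by
    have : (0:ℝ) < ((N+1:ℕ):ℝ) := by positivity
    positivity
  have hs : stirlingSeq (N+1) ≤ Real.sqrt π * Real.exp (1/(4*((N:ℝ)+1))) := by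
    have := log_s_upper N
    have h2 : stirlingSeq (N+1) = Real.exp (Real.log (stirlingSeq (N+1))) :=
      (Real.exp_log (stirlingSeq'_pos N)).symm
    rw [h2]
    calc Real.exp (Real.log (stirlingSeq (N+1)))
        ≤ Real.exp (Real.log (Real.sqrt π) + 1/(4*((N:ℝ)+1))) := Real.exp_le_exp.mpr this
      _ = Real.sqrt π * Real.exp (1/(4*((N:ℝ)+1))) := by
          rw [Real.exp_add, Real.exp_log (by positivity)]
  have hfact : ((N+1)! : ℝ) = stirlingSeq (N+1) *
      (Real.sqrt (2 * (N+1) : ℝ) * (((N+1:ℕ):ℝ) / Real.exp 1) ^ (N+1)) := by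
    rw [stirlingSeq]
    push_cast
    rw [div_mul_cancel₀]
    push_cast at hA
    exact hA.ne'
  rw [hfact]
  have hsqrt : Real.sqrt (2*π*((N+1:ℕ):ℝ)) = Real.sqrt π * Real.sqrt (2 * (N+1) : ℝ) := by
    rw [← Real.sqrt_mul pi_pos.le]
    congr 1
    push_cast
    ring
  calc stirlingSeq (N+1) * (Real.sqrt (2 * (N+1) : ℝ) * (((N+1:ℕ):ℝ) / Real.exp 1) ^ (N+1))
      ≤ (Real.sqrt π * Real.exp (1/(4*((N:ℝ)+1)))) *
        (Real.sqrt (2 * (N+1) : ℝ) * (((N+1:ℕ):ℝ) / Real.exp 1) ^ (N+1)) :=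
        mul_le_mul_of_nonneg_right hs hA.le
    _ = Real.exp (1/(4*((N+1:ℕ):ℝ))) * (Real.sqrt (2*π*((N+1:ℕ):ℝ)) *
        (((N+1:ℕ):ℝ) / Real.exp 1) ^ (N+1)) := by
        rw [hsqrt]
        push_cast
        ring

lemma stirling_le_fact (n : ℕ) (hn : 1 ≤ n) :
    Real.exp (1/(6*(2*(n:ℝ)+1))) * (Real.sqrt (2*π*n) * ((n:ℝ)/Real.exp 1)^n) ≤ (n ! : ℝ) := by
  obtain ⟨N, rfl⟩ : ∃ N, n = N + 1 := ⟨n - 1, by omega⟩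
  have hA : (0:ℝ) < Real.sqrt (2 * (N+1) : ℝ) * (((N+1:ℕ):ℝ) / Real.exp 1) ^ (N+1) := by
    have : (0:ℝ) < ((N+1:ℕ):ℝ) := by positivity
    positivity
  have hs : Real.sqrt π * Real.exp (1/(12*((N:ℝ)+3/2))) ≤ stirlingSeq (N+1) := by
    have := log_s_lower N
    have h2 : stirlingSeq (N+1) = Real.exp (Real.log (stirlingSeq (N+1))) :=
      (Real.exp_log (stirlingSeq'_pos N)).symm
    rw [h2]
    calc Real.sqrt π * Real.exp (1/(12*((N:ℝ)+3/2)))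
        = Real.exp (Real.log (Real.sqrt π) + 1/(12*((N:ℝ)+3/2))) := by
          rw [Real.exp_add, Real.exp_log (by positivity)]
      _ ≤ Real.exp (Real.log (stirlingSeq (N+1))) := Real.exp_le_exp.mpr this
  have hfact : ((N+1)! : ℝ) = stirlingSeq (N+1) *
      (Real.sqrt (2 * (N+1) : ℝ) * (((N+1:ℕ):ℝ) / Real.exp 1) ^ (N+1)) := by
    rw [stirlingSeq]
    push_cast
    rw [div_mul_cancel₀]
    push_cast at hA
    exact hA.ne'
  rw [hfact]
  have hsqrt : Real.sqrt (2*π*((N+1:ℕ):ℝ)) = Real.sqrt π * Real.sqrt (2 * (N+1) : ℝ) := by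
    rw [← Real.sqrt_mul pi_pos.le]
    congr 1
    push_cast
    ring
  have he : 1/(6*(2*((N+1:ℕ):ℝ)+1)) = 1/(12*((N:ℝ)+3/2)) := by
    push_cast
    ring_nf
  calc Real.exp (1/(6*(2*((N+1:ℕ):ℝ)+1))) * (Real.sqrt (2*π*((N+1:ℕ):ℝ)) *
        (((N+1:ℕ):ℝ) / Real.exp 1) ^ (N+1))
      = (Real.sqrt π * Real.exp (1/(12*((N:ℝ)+3/2)))) *
        (Real.sqrt (2 * (N+1) : ℝ) * (((N+1:ℕ):ℝ) / Real.exp 1) ^ (N+1)) := by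
        rw [hsqrt, he]
        ring
    _ ≤ stirlingSeq (N+1) * (Real.sqrt (2 * (N+1) : ℝ) * (((N+1:ℕ):ℝ) / Real.exp 1) ^ (N+1)) :=
        mul_le_mul_of_nonneg_right hs hA.le

set_option maxHeartbeats 1000000 in
/-- For m = 1,…,n-1: P(S_n(m/n)=m) ≤ (1/√(2π))·√(n/(m(n-m))). -/
theorem binomial_mode_bound (n m : ℕ) (hm1 : 1 ≤ m) (hmn : m ≤ n - 1) :
    (n.choose m : ℝ) * ((m : ℝ) / n) ^ m * (1 - (m : ℝ) / n) ^ (n - m)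
      ≤ (1 / Real.sqrt (2 * Real.pi)) * Real.sqrt ((n : ℝ) / (m * ((n : ℝ) - m))) := by
  have hnm : m + 1 ≤ n := by omega
  by_cases hn2 : n = 2
  · -- special case n = 2, m = 1
    have hm' : m = 1 := by omega
    subst hn2 hm'
    have h48 : Real.sqrt (2*π) ≤ 2 * Real.sqrt 2 := by
      have h8 : Real.sqrt (2*π) ≤ Real.sqrt 8 :=
        Real.sqrt_le_sqrt (by nlinarith [Real.pi_le_four])
      have : Real.sqrt 8 = 2 * Real.sqrt 2 := by
        rw [show (8:ℝ) = 4*2 by norm_num, Real.sqrt_mul (by norm_num : (0:ℝ) ≤ 4),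
          show Real.sqrt 4 = 2 by
            rw [show (4:ℝ) = 2^2 by norm_num, Real.sqrt_sq (by norm_num : (0:ℝ) ≤ 2)]]
      linarith [h8, this.le, this.ge]
    have hs2 : (0:ℝ) < Real.sqrt (2*π) := by positivity
    have hgoal : (1:ℝ)/2 ≤ (1 / Real.sqrt (2*π)) * Real.sqrt 2 := by
      rw [div_mul_eq_mul_div, one_mul, le_div_iff₀ hs2]
      nlinarith [Real.sq_sqrt (by norm_num : (0:ℝ) ≤ 2), Real.sqrt_nonneg 2]
    push_cast
    norm_num
    have hsp : Real.sqrt π ≤ 2 := by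
      nlinarith [Real.sq_sqrt Real.pi_pos.le, Real.sqrt_nonneg π, Real.pi_le_four]
    have h := one_div_le_one_div_of_le (by positivity : (0:ℝ) < Real.sqrt π) hsp
    simpa using h
  set k := n - m with hkdef
  have hkn : m + k = n := by omega
  have hk1 : 1 ≤ k := by omega
  have hn3 : 3 ≤ n := by omega
  have hn0 : (0:ℝ) < n := by exact_mod_cast (by omega : 0 < n)
  have hm0 : (0:ℝ) < m := by exact_mod_cast hm1
  have hk0 : (0:ℝ) < k := by exact_mod_cast hk1
  have hnr : (n:ℝ) = (m:ℝ) + k := by exact_mod_cast hkn.symm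
  have h1 : 1 - (m:ℝ)/n = (k:ℝ)/n := by
    rw [hnr]; field_simp; ring
  have h2 : (n:ℝ) - m = (k:ℝ) := by rw [hnr]; ring
  rw [h1, h2, Nat.cast_choose ℝ (by omega : m ≤ n), ← hkdef]
  -- abbreviations
  set e := Real.exp 1 with hedef
  have he0 : (0:ℝ) < e := Real.exp_pos 1
  set A := Real.sqrt (2*π*m) * ((m:ℝ)/e)^m with hA
  set B := Real.sqrt (2*π*k) * ((k:ℝ)/e)^k with hB
  set C := Real.sqrt (2*π*n) * ((n:ℝ)/e)^n with hC
  have hApos : 0 < A := by positivity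
  have hBpos : 0 < B := by positivity
  have hCpos : 0 < C := by positivity
  set em := Real.exp (1/(6*(2*(m:ℝ)+1))) with hem
  set ek := Real.exp (1/(6*(2*(k:ℝ)+1))) with hek
  set en := Real.exp (1/(4*(n:ℝ))) with hen
  have hfm : em * A ≤ (m ! : ℝ) := stirling_le_fact m hm1
  have hfk : ek * B ≤ (k ! : ℝ) := stirling_le_fact k hk1
  have hfn : (n ! : ℝ) ≤ en * C := stirling_fact_le n (by omega)
  -- key exponential comparison
  have hexp : en ≤ em * ek := by
    rw [hen, hem, hek, ← Real.exp_add, Real.exp_le_exp]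
    have hn3' : (3:ℝ) ≤ n := by exact_mod_cast hn3
    have key : 3*(2*(m:ℝ)+1)*(2*(k:ℝ)+1) ≤ 4*(n:ℝ)*((n:ℝ)+1) := by
      nlinarith [sq_nonneg ((m:ℝ) - k), hnr]
    rw [div_add_div _ _ (by positivity) (by positivity), div_le_div_iff₀ (by positivity) (by positivity)]
    nlinarith [hnr]
  calc (n ! : ℝ) / ((m ! : ℝ) * (k ! : ℝ)) * ((m:ℝ)/n)^m * ((k:ℝ)/n)^k
      ≤ (en * C) / ((em * A) * (ek * B)) * ((m:ℝ)/n)^m * ((k:ℝ)/n)^k := by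
        have hd : 0 < (em * A) * (ek * B) := by positivity
        have hnum : (n ! : ℝ) / ((m ! : ℝ) * (k ! : ℝ)) ≤ (en * C) / ((em * A) * (ek * B)) :=
          div_le_div₀ (by positivity) hfn hd
            (mul_le_mul hfm hfk (by positivity) (by positivity))
        have p1 : (0:ℝ) ≤ ((m:ℝ)/n)^m := by positivity
        have p2 : (0:ℝ) ≤ ((k:ℝ)/n)^k := by positivity
        exact mul_le_mul_of_nonneg_right (mul_le_mul_of_nonneg_right hnum p1) p2
    _ ≤ C / (A * B) * ((m:ℝ)/n)^m * ((k:ℝ)/n)^k := by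
        have hq : (en * C) / ((em * A) * (ek * B)) ≤ C / (A * B) := by
          have hrw : (en * C) / ((em * A) * (ek * B)) = (en / (em * ek)) * (C / (A * B)) := by
            field_simp
          rw [hrw]
          have : en / (em * ek) ≤ 1 := (div_le_one (by positivity)).mpr hexp
          calc (en / (em * ek)) * (C / (A * B)) ≤ 1 * (C / (A * B)) :=
              mul_le_mul_of_nonneg_right this (by positivity)
            _ = C / (A * B) := one_mul _
        have p1 : (0:ℝ) ≤ ((m:ℝ)/n)^m := by positivity
        have p2 : (0:ℝ) ≤ ((k:ℝ)/n)^k := by positivity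
        exact mul_le_mul_of_nonneg_right (mul_le_mul_of_nonneg_right hq p1) p2
    _ = Real.sqrt (2*π*n) / (Real.sqrt (2*π*m) * Real.sqrt (2*π*k)) := by
        have hpow : ((n:ℝ)/e)^n = ((n:ℝ)/e)^m * ((n:ℝ)/e)^k := by rw [← pow_add, hkn]
        have e1 : ((n:ℝ)/e)^m * ((m:ℝ)/n)^m = ((m:ℝ)/e)^m := by
          rw [← mul_pow]; congr 1; field_simp
        have e2 : ((n:ℝ)/e)^k * ((k:ℝ)/n)^k = ((k:ℝ)/e)^k := by
          rw [← mul_pow]; congr 1; field_simp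
        have hc1 : C * (((m:ℝ)/n)^m * ((k:ℝ)/n)^k)
            = Real.sqrt (2*π*n) * (((m:ℝ)/e)^m * ((k:ℝ)/e)^k) := by
          rw [hC, hpow]
          linear_combination (Real.sqrt (2*π*(n:ℝ)) * (((n:ℝ)/e)^k * ((k:ℝ)/n)^k)) * e1
            + (Real.sqrt (2*π*(n:ℝ)) * ((m:ℝ)/e)^m) * e2
        rw [div_mul_eq_mul_div, div_mul_eq_mul_div, mul_assoc C, hc1,
          div_eq_div_iff (by positivity) (by positivity), hA, hB]
        ring
    _ = (1 / Real.sqrt (2 * π)) * Real.sqrt ((n:ℝ) / ((m:ℝ) * (k:ℝ))) := by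
        rw [← Real.sqrt_mul (by positivity : (0:ℝ) ≤ 2*π*(m:ℝ)),
          ← Real.sqrt_div (by positivity : (0:ℝ) ≤ 2*π*(n:ℝ)),
          one_div, ← Real.sqrt_inv, ← Real.sqrt_mul (by positivity)]
        congr 1
        field_simp
end

section
/- Let m ∈ ℕ and let β_m have density m(1-θ)^{m-1} on [0,1]. For every 0 ≤ r ≤ 1: E[(1-rβ_m)^{-m/2}] ≤ 1 + (m/(2(m+1)))r + (m/(4(m+1)))r² + ((m+4)/(4(m+1)))r³. -/
open Set MeasureTheory intervalIntegral

section helper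
open Set

lemma hasDerivAt_one_sub_rpow (p q : ℝ) (hq : q = p - 1) {x : ℝ} (hx : x < 1) :
    HasDerivAt (fun y : ℝ => (1 - y) ^ p) (-p * (1 - x) ^ q) x := by
  have h1 : HasDerivAt (fun y : ℝ => 1 - y) (-1) x := (hasDerivAt_id x).const_sub 1
  have h2 : HasDerivAt (fun t : ℝ => t ^ p) (p * (1 - x) ^ (p - 1)) (1 - x) :=
    Real.hasDerivAt_rpow_const (Or.inl (by linarith))
  have := h2.comp x h1
  simpa [hq, mul_comm, mul_assoc, mul_left_comm, Function.comp_def] using this.congr_deriv (by ring)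

lemma key_pointwise (s : ℝ) (hs : 0 < s) {r θ : ℝ} (hr0 : 0 ≤ r) (hr1 : r ≤ 1)
    (hθ0 : 0 < θ) (hθ1 : θ < 1) :
    (1 - r * θ) ^ (-s) ≤ 1 + s * (r * θ) + s * (s + 1) / 2 * (r * θ) ^ 2
      + r ^ 3 * ((1 - θ) ^ (-s) - 1 - s * θ - s * (s + 1) / 2 * θ ^ 2) := by
  set R : ℝ → ℝ := fun x => (1 - x) ^ (-s) - 1 - s * x - s * (s + 1) / 2 * x ^ 2 with hRdef
  set H : ℝ → ℝ := fun x => s * x * (1 - x) ^ (-s - 1) - 3 * (1 - x) ^ (-s) + 3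
    + 2 * s * x + s * (s + 1) / 2 * x ^ 2 with hHdef
  set H' : ℝ → ℝ := fun x => s * (s + 1) * x * (1 - x) ^ (-s - 2)
    - 2 * s * (1 - x) ^ (-s - 1) + 2 * s + s * (s + 1) * x with hH'def
  -- derivative of R
  have hR : ∀ x : ℝ, x < 1 → HasDerivAt R
      (s * (1 - x) ^ (-s - 1) - s - s * (s + 1) * x) x := by
    intro x hx
    have h0 := hasDerivAt_one_sub_rpow (-s) (-s - 1) (by ring) hx
    have := (((h0.sub_const 1).sub ((hasDerivAt_id x).const_mul s)).sub
      ((hasDerivAt_pow 2 x).const_mul (s * (s + 1) / 2)))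
    exact this.congr_deriv (by push_cast; ring)
  -- derivative of H
  have hH : ∀ x : ℝ, x < 1 → HasDerivAt H (H' x) x := by
    intro x hx
    have h1 := hasDerivAt_one_sub_rpow (-s - 1) (-s - 2) (by ring) hx
    have h0 := hasDerivAt_one_sub_rpow (-s) (-s - 1) (by ring) hx
    have := (((((((hasDerivAt_id x).const_mul s).mul h1).sub
      (h0.const_mul 3)).add_const 3).add ((hasDerivAt_id x).const_mul (2 * s))).add
      ((hasDerivAt_pow 2 x).const_mul (s * (s + 1) / 2)))
    exact this.congr_deriv (by simp only [hH'def, id_eq]; push_cast; ring)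
  -- derivative of H'
  have hH' : ∀ x : ℝ, x < 1 → HasDerivAt H'
      (s * (s + 1) * ((s + 2) * x * (1 - x) ^ (-s - 3) + 1 - (1 - x) ^ (-s - 2))) x := by
    intro x hx
    have h2 := hasDerivAt_one_sub_rpow (-s - 2) (-s - 3) (by ring) hx
    have h1 := hasDerivAt_one_sub_rpow (-s - 1) (-s - 2) (by ring) hx
    have := (((((hasDerivAt_id x).const_mul (s * (s + 1))).mul h2).sub
      (h1.const_mul (2 * s))).add_const (2 * s)).add ((hasDerivAt_id x).const_mul (s * (s + 1)))
    exact this.congr_deriv (by simp only [id_eq]; ring)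
  -- nonnegativity of H'' via Bernoulli
  have hD : ∀ x ∈ Ico (0:ℝ) 1,
      0 ≤ s * (s + 1) * ((s + 2) * x * (1 - x) ^ (-s - 3) + 1 - (1 - x) ^ (-s - 2)) := by
    intro x hx
    have hu : (0:ℝ) < 1 - x := by linarith [hx.2]
    have hbern : 1 + (s + 3) * (-x) ≤ (1 + (-x)) ^ (s + 3) :=
      one_add_mul_self_le_rpow_one_add (by linarith [hx.2]) (by linarith)
    rw [show (1 : ℝ) + -x = 1 - x by ring] at hbern
    have e1 : (1 - x) ^ (s + 3) * (1 - x) ^ (-s - 3) = 1 := by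
      rw [← Real.rpow_add hu, show s + 3 + (-s - 3) = 0 by ring, Real.rpow_zero]
    have e2 : (1 - x) * (1 - x) ^ (-s - 3) = (1 - x) ^ (-s - 2) := by
      nth_rewrite 1 [← Real.rpow_one (1 - x)]
      rw [← Real.rpow_add hu]
      congr 1; ring
    have hpos : (0:ℝ) ≤ (1 - x) ^ (-s - 3) := Real.rpow_nonneg hu.le _
    have hmul : (1 + (s + 3) * (-x)) * (1 - x) ^ (-s - 3)
        ≤ (1 - x) ^ (s + 3) * (1 - x) ^ (-s - 3) :=
      mul_le_mul_of_nonneg_right hbern hpos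
    rw [e1] at hmul
    have h3 : (1 - x) ^ (-s - 2) - (s + 2) * x * (1 - x) ^ (-s - 3) ≤ 1 := by
      have : (1 + (s + 3) * (-x)) * (1 - x) ^ (-s - 3)
          = (1 - x) * (1 - x) ^ (-s - 3) - (s + 2) * x * (1 - x) ^ (-s - 3) := by ring
      rw [this, e2] at hmul; linarith
    have hb : 0 ≤ (s + 2) * x * (1 - x) ^ (-s - 3) + 1 - (1 - x) ^ (-s - 2) := by linarith
    positivity
  -- H' ≥ 0 on [0,1)
  have hH'cont : ContinuousOn H' (Ico (0:ℝ) 1) := fun x hx =>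
    ((hH' x hx.2).continuousAt).continuousWithinAt
  have hH'mono : MonotoneOn H' (Ico (0:ℝ) 1) := by
    apply monotoneOn_of_hasDerivWithinAt_nonneg (convex_Ico 0 1) hH'cont
    · intro x hx
      rw [interior_Ico] at hx
      exact ((hH' x hx.2).hasDerivWithinAt).mono interior_subset
    · intro x hx
      rw [interior_Ico] at hx
      exact hD x ⟨hx.1.le, hx.2⟩
  have hH'zero : H' 0 = 0 := by
    simp only [hH'def]; norm_num
  have hH'nonneg : ∀ x ∈ Ico (0:ℝ) 1, 0 ≤ H' x := by
    intro x hx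
    have := hH'mono (left_mem_Ico.2 one_pos) hx hx.1
    rwa [hH'zero] at this
  -- H ≥ 0 on [0,1)
  have hHcont : ContinuousOn H (Ico (0:ℝ) 1) := fun x hx =>
    ((hH x hx.2).continuousAt).continuousWithinAt
  have hHmono : MonotoneOn H (Ico (0:ℝ) 1) := by
    apply monotoneOn_of_hasDerivWithinAt_nonneg (convex_Ico 0 1) hHcont
    · intro x hx
      rw [interior_Ico] at hx
      exact ((hH x hx.2).hasDerivWithinAt).mono interior_subset
    · intro x hx
      rw [interior_Ico] at hx
      exact hH'nonneg x ⟨hx.1.le, hx.2⟩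
  have hHzero : H 0 = 0 := by
    simp only [hHdef]; norm_num
  have hHnonneg : ∀ x ∈ Ico (0:ℝ) 1, 0 ≤ H x := by
    intro x hx
    have := hHmono (left_mem_Ico.2 one_pos) hx hx.1
    rwa [hHzero] at this
  -- G = R x / x^3 monotone on (0,1)
  set G : ℝ → ℝ := fun x => R x / x ^ 3 with hGdef
  have hG : ∀ x ∈ Ioo (0:ℝ) 1, HasDerivAt G (H x / x ^ 4) x := by
    intro x hx
    have hx0 : x ≠ 0 := hx.1.ne'
    have hd := (hR x hx.2).div (hasDerivAt_pow 3 x) (pow_ne_zero 3 hx0)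
    apply hd.congr_deriv
    have hx4 : x ^ 4 ≠ 0 := pow_ne_zero 4 hx0
    field_simp
    simp only [hRdef, hHdef]
    push_cast
    ring
  have hGcont : ContinuousOn G (Ioo (0:ℝ) 1) := fun x hx =>
    ((hG x hx).continuousAt).continuousWithinAt
  have hGmono : MonotoneOn G (Ioo (0:ℝ) 1) := by
    apply monotoneOn_of_hasDerivWithinAt_nonneg (convex_Ioo 0 1) hGcont
    · intro x hx
      rw [interior_Ioo] at hx
      exact ((hG x hx).hasDerivWithinAt).mono interior_subset
    · intro x hx
      rw [interior_Ioo] at hx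
      exact div_nonneg (hHnonneg x ⟨hx.1.le, hx.2⟩) (pow_nonneg hx.1.le 4)
  -- conclude
  rcases eq_or_lt_of_le hr0 with hr | hr
  · rw [← hr]; norm_num
  · have hrθ0 : 0 < r * θ := mul_pos hr hθ0
    have hrθθ : r * θ ≤ θ := by nlinarith
    have hrθ1 : r * θ < 1 := lt_of_le_of_lt hrθθ hθ1
    have hle : G (r * θ) ≤ G θ := hGmono ⟨hrθ0, hrθ1⟩ ⟨hθ0, hθ1⟩ hrθθ
    have h3 : (0:ℝ) < (r * θ) ^ 3 := pow_pos hrθ0 3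
    have h4 : (0:ℝ) < θ ^ 3 := pow_pos hθ0 3
    rw [hGdef] at hle
    simp only at hle
    rw [div_le_div_iff₀ h3 h4] at hle
    have hfin : R (r * θ) ≤ r ^ 3 * R θ := by
      have h5 : R (r * θ) * θ ^ 3 ≤ (r ^ 3 * R θ) * θ ^ 3 := by nlinarith
      exact le_of_mul_le_mul_right h5 h4
    simp only [hRdef] at hfin
    linarith

end helper

/-- For m ∈ ℕ, m ≥ 1, β_m with density m(1-θ)^{m-1} on [0,1], and 0 ≤ r ≤ 1:
E[(1-rβ_m)^{-m/2}] ≤ 1 + (m/(2(m+1)))r + (m/(4(m+1)))r² + ((m+4)/(4(m+1)))r³. -/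
theorem beta_m_half_inverse_moment_bound (m : ℕ) (hm : 1 ≤ m) (r : ℝ)
    (hr0 : 0 ≤ r) (hr1 : r ≤ 1) :
    ∫ θ in (0:ℝ)..1, ((m : ℝ) * (1 - θ) ^ (m - 1)) / ((1 - r * θ) ^ ((m : ℝ) / 2))
      ≤ 1 + ((m : ℝ) / (2 * (m + 1))) * r + ((m : ℝ) / (4 * (m + 1))) * r ^ 2
        + (((m : ℝ) + 4) / (4 * (m + 1))) * r ^ 3 := by
  obtain ⟨k, rfl⟩ : ∃ k, m = k + 1 := ⟨m - 1, (Nat.succ_pred_eq_of_pos hm).symm⟩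
  simp only [Nat.add_sub_cancel]
  push_cast
  set K : ℝ := (k : ℝ) with hKdef
  have hK0 : (0:ℝ) ≤ K := Nat.cast_nonneg k
  set s : ℝ := (K + 1) / 2 with hsdef
  have hs : 0 < s := by positivity
  set f : ℝ → ℝ := fun θ => (K + 1) * (1 - θ) ^ k / (1 - r * θ) ^ ((K + 1) / 2) with hfdef
  set U : ℝ → ℝ := fun θ => (K + 1) * (1 - θ) ^ k *
      (1 + s * (r * θ) + s * (s + 1) / 2 * (r * θ) ^ 2
        + r ^ 3 * ((1 - θ) ^ (-s) - 1 - s * θ - s * (s + 1) / 2 * θ ^ 2)) with hUdef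
  -- pointwise bound on Ioo 0 1
  have hfU : ∀ θ ∈ Ioo (0:ℝ) 1, f θ ≤ U θ := by
    intro θ hθ
    have hrθ : r * θ ≤ θ := mul_le_of_le_one_left hθ.1.le hr1
    have h1 : 0 < 1 - r * θ := by
      have := hθ.2; nlinarith
    have hkey := key_pointwise s hs hr0 hr1 hθ.1 hθ.2
    have hc : (0:ℝ) ≤ (K + 1) * (1 - θ) ^ k := by
      have := hθ.2
      have h2 : (0:ℝ) ≤ 1 - θ := by linarith
      positivity
    have hf_eq : f θ = (K + 1) * (1 - θ) ^ k * (1 - r * θ) ^ (-s) := by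
      rw [hfdef]
      simp only
      rw [Real.rpow_neg h1.le, div_eq_mul_inv, hsdef]
    rw [hf_eq, hUdef]
    exact mul_le_mul_of_nonneg_left hkey hc
  -- nonnegativity of f
  have hf0 : ∀ θ ∈ Ioo (0:ℝ) 1, 0 ≤ f θ := by
    intro θ hθ
    have h2 : (0:ℝ) ≤ 1 - θ := by linarith [hθ.2]
    have h1 : (0:ℝ) ≤ 1 - r * θ := by nlinarith [hθ.2, hθ.1]
    exact div_nonneg (by positivity) (Real.rpow_nonneg h1 _)
  -- decomposition of U
  set P : ℝ → ℝ := fun θ => (K + 1) * (1 - θ) ^ k *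
      ((1 + s * (r * θ) + s * (s + 1) / 2 * (r * θ) ^ 2)
        - r ^ 3 * (1 + s * θ + s * (s + 1) / 2 * θ ^ 2)) with hPdef
  set Q : ℝ → ℝ := fun θ => (r ^ 3 * (K + 1)) * ((1 - θ) ^ k * (1 - θ) ^ (-s)) with hQdef
  have hUPQ : ∀ θ : ℝ, U θ = P θ + Q θ := by intro θ; simp only [hUdef, hPdef, hQdef]; ring
  set p : ℝ := K - s with hpdef
  have hp1 : (-1:ℝ) < p := by rw [hpdef, hsdef]; linarith
  have hp1' : p + 1 = (K + 1) / 2 := by rw [hpdef, hsdef]; ring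
  set Q' : ℝ → ℝ := fun θ => (r ^ 3 * (K + 1)) * (1 - θ) ^ p with hQ'def
  have hQQ' : ∀ θ ∈ Ioo (0:ℝ) 1, Q θ = Q' θ := by
    intro θ hθ
    have h2 : (0:ℝ) < 1 - θ := by linarith [hθ.2]
    simp only [hQdef, hQ'def]
    rw [← Real.rpow_natCast (1 - θ) k, ← Real.rpow_add h2, hpdef, hKdef]
    congr 1
  -- integrability of Q'
  have hQ'int : IntervalIntegrable Q' volume 0 1 := by
    have h1 : IntervalIntegrable (fun x : ℝ => x ^ p) volume 0 1 :=
      intervalIntegrable_rpow' hp1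
    have h2 := (h1.comp_sub_left 1)
    norm_num at h2
    exact (h2.symm.const_mul _)
  -- a.e. membership tools
  have haeIoc : ∀ᵐ θ ∂volume.restrict (Ioc (0:ℝ) 1), θ ∈ Ioo (0:ℝ) 1 := by
    rw [← Measure.restrict_congr_set Ioo_ae_eq_Ioc]
    exact ae_restrict_mem measurableSet_Ioo
  have haeIcc : ∀ᵐ θ ∂volume.restrict (Icc (0:ℝ) 1), θ ∈ Ioo (0:ℝ) 1 := by
    rw [← Measure.restrict_congr_set Ioo_ae_eq_Icc]
    exact ae_restrict_mem measurableSet_Ioo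
  -- integrability of Q, P, U
  have hQint : IntervalIntegrable Q volume 0 1 := by
    rw [intervalIntegrable_iff, uIoc_of_le (zero_le_one' ℝ)] at hQ'int ⊢
    exact hQ'int.congr ((haeIoc.mono) fun θ hθ => (hQQ' θ hθ).symm)
  have hPint : IntervalIntegrable P volume 0 1 := by
    apply Continuous.intervalIntegrable
    simp only [hPdef]
    fun_prop
  have hUint : IntervalIntegrable U volume 0 1 := by
    have hU' : U = fun θ => P θ + Q θ := funext hUPQ
    rw [hU']
    exact hPint.add hQint
  -- integrability of f
  have hfint : IntervalIntegrable f volume 0 1 := by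
    rw [intervalIntegrable_iff, uIoc_of_le (zero_le_one' ℝ)]
    have hUint' : IntegrableOn U (Ioc 0 1) volume := by
      have := hUint
      rwa [intervalIntegrable_iff, uIoc_of_le (zero_le_one' ℝ)] at this
    apply hUint'.mono' ?_ ?_
    · -- measurability of f
      apply Measurable.aestronglyMeasurable
      have mden : Measurable fun θ : ℝ => (1 - r * θ) ^ ((K + 1) / 2) := by
        have hc : Continuous fun x : ℝ => x ^ ((K + 1) / 2) :=
          Real.continuous_rpow_const (by positivity)
        exact hc.measurable.comp (by fun_prop)
      exact Measurable.div (by fun_prop) mden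
    · refine haeIoc.mono fun θ hθ => ?_
      rw [Real.norm_eq_abs, abs_of_nonneg (hf0 θ hθ)]
      exact hfU θ hθ
  -- comparison of integrals
  have hmono : (∫ θ in (0:ℝ)..1, f θ) ≤ ∫ θ in (0:ℝ)..1, U θ :=
    integral_mono_ae_restrict (zero_le_one' ℝ) hfint hUint
      (haeIcc.mono fun θ hθ => hfU θ hθ)
  refine hmono.trans ?_
  -- compute the integral of U
  set a0 : ℝ := 1 - r ^ 3 with ha0
  set a1 : ℝ := s * r - r ^ 3 * s with ha1
  set a2 : ℝ := s * (s + 1) / 2 * r ^ 2 - r ^ 3 * (s * (s + 1) / 2) with ha2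
  set C0 : ℝ := (K + 1) * (a0 + a1 + a2) with hC0
  set C1 : ℝ := -((K + 1) * (a1 + 2 * a2)) with hC1
  set C2 : ℝ := (K + 1) * a2 with hC2
  set pol : ℝ → ℝ := fun u => C0 * u ^ k + C1 * u ^ (k + 1) + C2 * u ^ (k + 2) with hpol
  have hPpol : ∀ θ : ℝ, P θ = pol (1 - θ) := by
    intro θ
    simp only [hPdef, hpol, hC0, hC1, hC2, ha0, ha1, ha2, pow_succ]
    ring
  have hI : ∀ n : ℕ, ∫ x in (0:ℝ)..1, x ^ n = 1 / ((n : ℝ) + 1) := by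
    intro n; rw [integral_pow]; norm_num
  have hPval : ∫ θ in (0:ℝ)..1, P θ = C0 / (K + 1) + C1 / (K + 2) + C2 / (K + 3) := by
    rw [show P = (fun θ => pol (1 - θ)) from funext hPpol]
    have hcomp := integral_comp_sub_left (a := 0) (b := 1) pol 1
    simp only [sub_self, sub_zero] at hcomp
    rw [hcomp, hpol]
    rw [integral_add ((show Continuous fun u : ℝ => C0 * u ^ k from continuous_const.mul (continuous_pow k)).intervalIntegrable 0 1 |>.add
          ((show Continuous fun u : ℝ => C1 * u ^ (k+1) from continuous_const.mul (continuous_pow (k+1))).intervalIntegrable 0 1))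
        ((show Continuous fun u : ℝ => C2 * u ^ (k+2) from continuous_const.mul (continuous_pow (k+2))).intervalIntegrable 0 1),
      integral_add ((show Continuous fun u : ℝ => C0 * u ^ k from continuous_const.mul (continuous_pow k)).intervalIntegrable 0 1)
        ((show Continuous fun u : ℝ => C1 * u ^ (k+1) from continuous_const.mul (continuous_pow (k+1))).intervalIntegrable 0 1),
      intervalIntegral.integral_const_mul, intervalIntegral.integral_const_mul, intervalIntegral.integral_const_mul, hI, hI, hI]
    push_cast
    ring
  have hQ'val : ∫ θ in (0:ℝ)..1, Q' θ = 2 * r ^ 3 := by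
    simp only [hQ'def]
    rw [intervalIntegral.integral_const_mul]
    have hcomp := integral_comp_sub_left (a := 0) (b := 1) (fun x : ℝ => x ^ p) 1
    simp only [sub_self, sub_zero] at hcomp
    rw [hcomp, integral_rpow (Or.inl hp1), Real.one_rpow,
      Real.zero_rpow (by rw [hp1']; positivity), hp1']
    have hK1 : K + 1 ≠ 0 := by positivity
    field_simp
    ring
  have hQval : ∫ θ in (0:ℝ)..1, Q θ = 2 * r ^ 3 := by
    rw [← hQ'val]
    apply intervalIntegral.integral_congr_ae
    have h1 : ∀ᵐ x : ℝ ∂volume, x ∉ ({1} : Set ℝ) :=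
      measure_eq_zero_iff_ae_notMem.mp (measure_singleton 1)
    refine h1.mono fun x hx hmem => ?_
    rw [uIoc_of_le (zero_le_one' ℝ)] at hmem
    have hx1 : x < 1 := lt_of_le_of_ne hmem.2 (by simpa using hx)
    exact hQQ' x ⟨hmem.1, hx1⟩
  have hUval : ∫ θ in (0:ℝ)..1, U θ
      = (C0 / (K + 1) + C1 / (K + 2) + C2 / (K + 3)) + 2 * r ^ 3 := by
    rw [show U = fun θ => P θ + Q θ from funext hUPQ, integral_add hPint hQint, hPval, hQval]
  rw [hUval]
  apply le_of_eq
  have h1 : K + 1 ≠ 0 := by positivity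
  have h2 : K + 2 ≠ 0 := by positivity
  have h3 : K + 3 ≠ 0 := by positivity
  simp only [hC0, hC1, hC2, ha0, ha1, ha2, hsdef]
  field_simp
  ring
end

section
/- Let m ∈ ℕ, x ∈ (0,1), z ∈ [0,1], φ(x)=√(x(1-x)), and let β_m have density m(1-θ)^{m-1} on [0,1]. Then E[φ^m(x)/φ^m(x+(z-x)β_m)] ≤ 1 + (m/(2(m+1)))·|z-x|/φ²(x) + (m/(4(m+1)))·|z-x|²/φ⁴(x) + ((m+4)/(4(m+1)))·|z-x|³/φ⁶(x). -/
open Set MeasureTheory intervalIntegral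

lemma hd_pow_one_sub (c γ : ℝ) {a : ℝ} (h : 0 < 1 - c*a) :
    HasDerivAt (fun u : ℝ => (1 - c*u) ^ (-γ)) (c * γ * (1 - c*a) ^ (-γ - 1)) a := by
  have h1 : HasDerivAt (fun u : ℝ => 1 - c*u) (-c) a := by
    simpa using ((hasDerivAt_id a).const_mul c).const_sub 1
  have h2 := (Real.hasDerivAt_rpow_const (x := 1 - c*a) (p := -γ) (Or.inl (ne_of_gt h)))
  have h3 := h2.comp a h1
  refine h3.congr_deriv ?_; ring

lemma nonneg_of_deriv {F F' : ℝ → ℝ} {T : ℝ} (hT : 0 ≤ T)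
    (hF : ∀ a ∈ Set.Icc 0 T, HasDerivAt F (F' a) a)
    (h0 : F 0 = 0) (hF' : ∀ a ∈ Set.Icc 0 T, 0 ≤ F' a) : 0 ≤ F T := by
  have hmono : MonotoneOn F (Icc 0 T) := by
    apply monotoneOn_of_deriv_nonneg (convex_Icc 0 T)
    · exact fun a ha => (hF a ha).continuousAt.continuousWithinAt
    · intro a ha
      exact ((hF a (interior_subset ha)).differentiableAt).differentiableWithinAt
    · intro a ha
      rw [(hF a (interior_subset ha)).deriv]
      exact hF' a (interior_subset ha)
  have := hmono (left_mem_Icc.2 hT) (right_mem_Icc.2 hT) hT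
  linarith [this, h0.symm ▸ this]

lemma ladder1 {β r t : ℝ} (hβ : 0 ≤ β) (hr0 : 0 ≤ r) (hr1 : r ≤ 1)
    (ht0 : 0 ≤ t) (ht1 : t < 1) :
    (1 - r*t) ^ (-β) ≤ r * (1-t)^(-β) + (1 - r) := by
  have key : 0 ≤ r * (1-t)^(-β) + (1 - r) - (1 - r*t) ^ (-β) := by
    apply nonneg_of_deriv (F := fun a => r * (1-a)^(-β) + (1 - r) - (1 - r*a) ^ (-β))
      (F' := fun a => r * (1 * β * (1-a)^(-β-1)) - r * β * (1 - r*a)^(-β-1)) ht0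
    · intro a ha
      have ha1 : 0 < 1 - a := by
        rcases ha with ⟨h1, h2⟩; linarith
      have ha2 : 0 < 1 - r*a := by
        rcases ha with ⟨h1, h2⟩; nlinarith
      have d1 : HasDerivAt (fun u : ℝ => (1 - 1*u) ^ (-β)) (1 * β * (1-a)^(-β-1)) a := by
        have := hd_pow_one_sub 1 β (a := a) (by linarith)
        convert this using 2 <;> ring_nf
      have d1' : HasDerivAt (fun u : ℝ => (1 - u) ^ (-β)) (1 * β * (1-a)^(-β-1)) a := by
        convert d1 using 2; ring_nf
      have d2 := hd_pow_one_sub r β (a := a) ha2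
      exact (((d1'.const_mul r).add_const (1-r)).sub (by simpa using d2))
    · simp [Real.one_rpow]
    · intro a ha
      have ha1 : 0 < 1 - a := by rcases ha with ⟨h1, h2⟩; linarith
      have ha2 : 1 - a ≤ 1 - r*a := by nlinarith [ha.1, ha.2]
      have := Real.rpow_le_rpow_of_nonpos ha1 ha2 (by linarith : -β - 1 ≤ 0)
      have hrβ : 0 ≤ r * β := mul_nonneg hr0 hβ
      calc (0:ℝ) ≤ r * β * ((1-a)^(-β-1) - (1 - r*a)^(-β-1)) := by
            apply mul_nonneg hrβ; linarith
        _ = r * (1 * β * (1-a)^(-β-1)) - r * β * (1 - r*a)^(-β-1) := by ring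
  linarith

lemma ladder2 {A r t : ℝ} (hA : 0 ≤ A) (hr0 : 0 ≤ r) (hr1 : r ≤ 1)
    (ht0 : 0 ≤ t) (ht1 : t < 1) :
    (1 - r*t)^(-(A+1)) - 1 - (A+1)*(r*t) ≤ r^2 * ((1-t)^(-(A+1)) - 1 - (A+1)*t) := by
  have key : 0 ≤ r^2 * ((1-t)^(-(A+1)) - 1 - (A+1)*t) -
      ((1 - r*t)^(-(A+1)) - 1 - (A+1)*(r*t)) := by
    apply nonneg_of_deriv
      (F := fun a => r^2 * ((1-a)^(-(A+1)) - 1 - (A+1)*a) -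
        ((1 - r*a)^(-(A+1)) - 1 - (A+1)*(r*a)))
      (F' := fun a => r^2 * (1 * (A+1) * (1-a)^(-(A+1)-1) - (A+1)) -
        (r * (A+1) * (1 - r*a)^(-(A+1)-1) - (A+1)*r)) ht0
    · intro a ha
      have ha1 : 0 < 1 - 1*a := by rcases ha with ⟨h1, h2⟩; nlinarith
      have ha2 : 0 < 1 - r*a := by rcases ha with ⟨h1, h2⟩; nlinarith
      have d1 := hd_pow_one_sub 1 (A+1) (a := a) ha1
      have d1' : HasDerivAt (fun u : ℝ => (1 - u) ^ (-(A+1))) (1 * (A+1) * (1-a)^(-(A+1)-1)) a := by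
        convert d1 using 2
        · ring_nf
        · norm_num
      have d2 := hd_pow_one_sub r (A+1) (a := a) ha2
      have e1 : HasDerivAt (fun u : ℝ => (1-u)^(-(A+1)) - 1 - (A+1)*u)
          (1 * (A+1) * (1-a)^(-(A+1)-1) - (A+1)) a := by
        have := (d1'.sub_const 1).sub ((hasDerivAt_id a).const_mul (A+1))
        refine this.congr_deriv ?_; ring
      have e2 : HasDerivAt (fun u : ℝ => (1 - r*u)^(-(A+1)) - 1 - (A+1)*(r*u))
          (r * (A+1) * (1 - r*a)^(-(A+1)-1) - (A+1)*r) a := by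
        have h4 : HasDerivAt (fun u : ℝ => (A+1)*(r*u)) ((A+1)*r) a := by
          simpa [mul_assoc] using ((hasDerivAt_id a).const_mul r).const_mul (A+1)
        exact (d2.sub_const 1).sub h4
      exact (e1.const_mul (r^2)).sub e2
    · norm_num [Real.one_rpow]
    · intro a ha
      have ha1 : 0 < 1 - a := by rcases ha with ⟨h1, h2⟩; linarith
      have hl := ladder1 (β := A+2) (by linarith) hr0 hr1 ha.1 (by rcases ha with ⟨h1,h2⟩; linarith)
      have hex : ∀ w : ℝ, -(A+1)-1 = -(A+2) := fun _ => by ring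
      rw [hex 0]
      have goal : 0 ≤ (A+1) * r * (r * ((1-a)^(-(A+2)) - 1) - ((1 - r*a)^(-(A+2)) - 1)) := by
        apply mul_nonneg (mul_nonneg (by linarith) hr0)
        linarith
      calc (0:ℝ) ≤ (A+1) * r * (r * ((1-a)^(-(A+2)) - 1) - ((1 - r*a)^(-(A+2)) - 1)) := goal
        _ = r^2 * (1 * (A+1) * (1-a)^(-(A+2)) - (A+1)) -
            (r * (A+1) * (1 - r*a)^(-(A+2)) - (A+1)*r) := by ring
  linarith

lemma ladder3 {A r t : ℝ} (hA : 0 ≤ A) (hr0 : 0 ≤ r) (hr1 : r ≤ 1)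
    (ht0 : 0 ≤ t) (ht1 : t < 1) :
    (1 - r*t)^(-A) ≤ 1 + A*(r*t) + (A*(A+1)/2)*(r*t)^2
      + r^3 * ((1-t)^(-A) - 1 - A*t - (A*(A+1)/2)*t^2) := by
  have key : 0 ≤ r^3 * ((1-t)^(-A) - 1 - A*t - (A*(A+1)/2)*t^2) -
      ((1 - r*t)^(-A) - 1 - A*(r*t) - (A*(A+1)/2)*(r*t)^2) := by
    apply nonneg_of_deriv
      (F := fun a => r^3 * ((1-a)^(-A) - 1 - A*a - (A*(A+1)/2)*a^2) -
        ((1 - r*a)^(-A) - 1 - A*(r*a) - (A*(A+1)/2)*(r*a)^2))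
      (F' := fun a => r^3 * (1 * A * (1-a)^(-A-1) - A - (A*(A+1))*a) -
        (r * A * (1 - r*a)^(-A-1) - A*r - (A*(A+1))*(r^2*a))) ht0
    · intro a ha
      have ha1 : 0 < 1 - 1*a := by rcases ha with ⟨h1, h2⟩; nlinarith
      have ha2 : 0 < 1 - r*a := by rcases ha with ⟨h1, h2⟩; nlinarith
      have d1 := hd_pow_one_sub 1 A (a := a) ha1
      have d1' : HasDerivAt (fun u : ℝ => (1 - u) ^ (-A)) (1 * A * (1-a)^(-A-1)) a := by
        convert d1 using 2 <;> norm_num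
      have d2 := hd_pow_one_sub r A (a := a) ha2
      have e1 : HasDerivAt (fun u : ℝ => (1-u)^(-A) - 1 - A*u - (A*(A+1)/2)*u^2)
          (1 * A * (1-a)^(-A-1) - A - (A*(A+1))*a) a := by
        have p1 : HasDerivAt (fun u : ℝ => (A*(A+1)/2)*u^2) ((A*(A+1))*a) a := by
          have := ((hasDerivAt_pow 2 a)).const_mul (A*(A+1)/2)
          refine this.congr_deriv ?_; ring
        have := ((d1'.sub_const 1).sub ((hasDerivAt_id a).const_mul A)).sub p1
        refine this.congr_deriv ?_; ring
      have e2 : HasDerivAt (fun u : ℝ => (1 - r*u)^(-A) - 1 - A*(r*u) - (A*(A+1)/2)*(r*u)^2)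
          (r * A * (1 - r*a)^(-A-1) - A*r - (A*(A+1))*(r^2*a)) a := by
        have p1 : HasDerivAt (fun u : ℝ => A*(r*u)) (A*r) a := by
          simpa [mul_assoc] using ((hasDerivAt_id a).const_mul r).const_mul A
        have p2 : HasDerivAt (fun u : ℝ => (A*(A+1)/2)*(r*u)^2) ((A*(A+1))*(r^2*a)) a := by
          have hin : HasDerivAt (fun u : ℝ => r*u) r a := by
            simpa using (hasDerivAt_id a).const_mul r
          have h5 : HasDerivAt (fun u : ℝ => (r*u)^2) ((2:ℕ) * (r*a)^(2-1) * r) a :=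
            HasDerivAt.comp a (hasDerivAt_pow 2 (r*a)) hin
          have := h5.const_mul (A*(A+1)/2)
          refine this.congr_deriv ?_; push_cast; ring
        exact ((d2.sub_const 1).sub p1).sub p2
      exact (e1.const_mul (r^3)).sub e2
    · norm_num [Real.one_rpow]
    · intro a ha
      have hl := ladder2 (A := A) hA hr0 hr1 ha.1 (by rcases ha with ⟨h1,h2⟩; linarith)
      have hex : -A-1 = -(A+1) := by ring
      rw [hex]
      have goal : 0 ≤ A * r * (r^2 * ((1-a)^(-(A+1)) - 1 - (A+1)*a)
          - ((1 - r*a)^(-(A+1)) - 1 - (A+1)*(r*a))) := by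
        apply mul_nonneg (mul_nonneg hA hr0)
        linarith
      calc (0:ℝ) ≤ A * r * (r^2 * ((1-a)^(-(A+1)) - 1 - (A+1)*a)
            - ((1 - r*a)^(-(A+1)) - 1 - (A+1)*(r*a))) := goal
        _ = r^3 * (1 * A * (1-a)^(-(A+1)) - A - (A*(A+1))*a) -
            (r * A * (1 - r*a)^(-(A+1)) - A*r - (A*(A+1))*(r^2*a)) := by ring
  linarith

lemma Jint (m : ℕ) (hm : 1 ≤ m) (a b c e : ℝ) :
    (∫ u in (0:ℝ)..1, (a * u^(m-1) + b * u^m + c * u^(m+1) + e * u^((m:ℝ)/2 - 1)))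
    = a/m + b/(m+1) + c/(m+2) + e/((m:ℝ)/2) := by
  have hm1 : (1:ℝ) ≤ (m:ℝ) := by exact_mod_cast hm
  have hp : (-1:ℝ) < (m:ℝ)/2 - 1 := by linarith
  have i1 : IntervalIntegrable (fun u : ℝ => u^((m:ℝ)/2-1)) MeasureTheory.volume 0 1 :=
    intervalIntegral.intervalIntegrable_rpow' hp
  have c1 : Continuous (fun u : ℝ => a * u^(m-1)) := by continuity
  have c2 : Continuous (fun u : ℝ => b * u^m) := by continuity
  have c3 : Continuous (fun u : ℝ => c * u^(m+1)) := by continuity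
  rw [integral_add (f := fun u : ℝ => a * u^(m-1) + b * u^m + c * u^(m+1)) (((c1.add c2).add c3).intervalIntegrable 0 1) (i1.const_mul e),
    integral_add (f := fun u : ℝ => a * u^(m-1) + b * u^m) ((c1.add c2).intervalIntegrable 0 1) (c3.intervalIntegrable 0 1),
    integral_add (c1.intervalIntegrable 0 1) (c2.intervalIntegrable 0 1),
    intervalIntegral.integral_const_mul, intervalIntegral.integral_const_mul,
    intervalIntegral.integral_const_mul, intervalIntegral.integral_const_mul,
    integral_pow, integral_pow, integral_pow, integral_rpow (Or.inl hp)]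
  rw [Real.one_rpow, Real.zero_rpow (by linarith : (m:ℝ)/2 - 1 + 1 ≠ 0)]
  have h0 : ∀ n : ℕ, (0:ℝ)^(n+1) = 0 := fun n => zero_pow (Nat.succ_ne_zero n)
  rw [h0, h0, h0, one_pow, one_pow, one_pow]
  have hc : ((m - 1 : ℕ) : ℝ) = (m:ℝ) - 1 := by
    push_cast [Nat.cast_sub hm]; ring
  rw [hc]
  push_cast
  ring_nf

lemma ratio_bound (m : ℕ) {s Y r t : ℝ} (hs : 0 < s) (hY : 0 < Y)
    (hr0 : 0 ≤ r) (hr1 : r ≤ 1) (ht0 : 0 ≤ t) (ht1 : t < 1)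
    (hb : s * (1 - r*t) ≤ Y) :
    Real.sqrt s ^ m / Real.sqrt Y ^ m ≤
      1 + ((m:ℝ)/2)*(r*t) + (((m:ℝ)/2)*((m:ℝ)/2+1)/2)*(r*t)^2
      + r^3 * ((1-t)^(-((m:ℝ)/2)) - 1 - ((m:ℝ)/2)*t - (((m:ℝ)/2)*((m:ℝ)/2+1)/2)*t^2) := by
  set A : ℝ := (m:ℝ)/2 with hA
  have hA0 : 0 ≤ A := by positivity
  have hrt : r * t < 1 := by nlinarith
  have h1rt : 0 < 1 - r*t := by linarith
  have e1 : Real.sqrt s ^ m = s ^ A := by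
    rw [Real.sqrt_eq_rpow, ← Real.rpow_natCast (s ^ ((1:ℝ)/2)) m, ← Real.rpow_mul hs.le]
    rw [hA]; congr 1; ring
  have e2 : Real.sqrt Y ^ m = Y ^ A := by
    rw [Real.sqrt_eq_rpow, ← Real.rpow_natCast (Y ^ ((1:ℝ)/2)) m, ← Real.rpow_mul hY.le]
    rw [hA]; congr 1; ring
  have step1 : Real.sqrt s ^ m / Real.sqrt Y ^ m ≤ (1 - r*t) ^ (-A) := by
    rw [e1, e2, ← Real.div_rpow hs.le hY.le]
    have hsy : s / Y ≤ (1 - r*t)⁻¹ := by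
      rw [div_le_iff₀ hY]
      rw [inv_mul_eq_div, le_div_iff₀ h1rt]
      linarith
    calc (s / Y) ^ A ≤ ((1 - r*t)⁻¹) ^ A :=
          Real.rpow_le_rpow (div_nonneg hs.le hY.le) hsy hA0
      _ = (1 - r*t) ^ (-A) := by
          rw [Real.inv_rpow h1rt.le, ← Real.rpow_neg h1rt.le]
  exact step1.trans (ladder3 hA0 hr0 hr1 ht0 ht1)

noncomputable def A0 (m : ℕ) (r : ℝ) : ℝ :=
  (m:ℝ)*(1 + ((m:ℝ)/2)*r + (((m:ℝ)/2)*((m:ℝ)/2+1)/2)*r^2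
    - r^3*(1 + (m:ℝ)/2 + ((m:ℝ)/2)*((m:ℝ)/2+1)/2))
noncomputable def B0 (m : ℕ) (r : ℝ) : ℝ :=
  (m:ℝ)*(-(((m:ℝ)/2)*r) - 2*(((m:ℝ)/2)*((m:ℝ)/2+1)/2)*r^2
    + r^3*((m:ℝ)/2 + 2*(((m:ℝ)/2)*((m:ℝ)/2+1)/2)))
noncomputable def C0 (m : ℕ) (r : ℝ) : ℝ := (m:ℝ)*(((m:ℝ)/2)*((m:ℝ)/2+1)/2)*(r^2 - r^3)

lemma weighted_bound (m : ℕ) (hm : 1 ≤ m) {s Y r t : ℝ} (hs : 0 < s) (hY : 0 < Y)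
    (hr0 : 0 ≤ r) (hr1 : r ≤ 1) (ht0 : 0 ≤ t) (ht1 : t < 1)
    (hb : s * (1 - r*t) ≤ Y) :
    ((m:ℝ) * (1-t)^(m-1)) * (Real.sqrt s ^ m / Real.sqrt Y ^ m) ≤
      A0 m r * (1-t)^(m-1) + B0 m r * (1-t)^m + C0 m r * (1-t)^(m+1)
        + r^3*(m:ℝ) * (1-t)^((m:ℝ)/2 - 1) := by
  have hu : 0 < 1 - t := by linarith
  have hrat := ratio_bound m hs hY hr0 hr1 ht0 ht1 hb
  have hw : (0:ℝ) ≤ (m:ℝ)*(1-t)^(m-1) := by positivity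
  refine le_trans (mul_le_mul_of_nonneg_left hrat hw) (le_of_eq ?_)
  have hsplit : ((1:ℝ)-t)^(m-1) * (1-t)^(-((m:ℝ)/2)) = (1-t)^((m:ℝ)/2-1) := by
    rw [← Real.rpow_natCast ((1:ℝ)-t) (m-1), ← Real.rpow_add hu]
    congr 1
    have hcast : ((m-1 : ℕ) : ℝ) = (m:ℝ) - 1 := by
      have h := Nat.cast_sub hm (R := ℝ); push_cast at h ⊢; linarith
    rw [hcast]; ring
  have expand : ((m:ℝ)*(1-t)^(m-1)) *
      (1 + ((m:ℝ)/2)*(r*t) + (((m:ℝ)/2)*((m:ℝ)/2+1)/2)*(r*t)^2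
        + r^3 * ((1-t)^(-((m:ℝ)/2)) - 1 - ((m:ℝ)/2)*t - (((m:ℝ)/2)*((m:ℝ)/2+1)/2)*t^2))
      = ((m:ℝ)*(1-t)^(m-1)) *
          ((1 + ((m:ℝ)/2)*(r*t) + (((m:ℝ)/2)*((m:ℝ)/2+1)/2)*(r*t)^2)
            - r^3*(1 + ((m:ℝ)/2)*t + (((m:ℝ)/2)*((m:ℝ)/2+1)/2)*t^2))
        + (m:ℝ)*r^3*(((1:ℝ)-t)^(m-1) * (1-t)^(-((m:ℝ)/2))) := by ring
  rw [expand, hsplit, A0, B0, C0]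
  obtain ⟨k, rfl⟩ : ∃ k, m = k + 1 := ⟨m-1, (Nat.succ_pred_eq_of_pos hm).symm⟩
  simp only [Nat.add_sub_cancel]
  push_cast
  ring

lemma Jval (m : ℕ) (hm : 1 ≤ m) (r : ℝ) :
    A0 m r/(m:ℝ) + B0 m r/((m:ℝ)+1) + C0 m r/((m:ℝ)+2) + (r^3*(m:ℝ))/((m:ℝ)/2)
    = 1 + ((m:ℝ)/(2*((m:ℝ)+1)))*r + ((m:ℝ)/(4*((m:ℝ)+1)))*r^2
      + (((m:ℝ)+4)/(4*((m:ℝ)+1)))*r^3 := by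
  have hM1 : (1:ℝ) ≤ (m:ℝ) := by exact_mod_cast hm
  have h1 : (m:ℝ) ≠ 0 := by positivity
  have h2 : (m:ℝ) + 1 ≠ 0 := by positivity
  have h3 : (m:ℝ) + 2 ≠ 0 := by positivity
  rw [A0, B0, C0]
  field_simp
  ring



/-- For m ∈ ℕ (m ≥ 1), x ∈ (0,1), z ∈ [0,1], φ(x)=√(x(1-x)), β_m with density
m(1-θ)^{m-1} on [0,1]:
E[φ^m(x)/φ^m(x+(z-x)β_m)] ≤ 1 + (m/(2(m+1)))|z-x|/φ²(x) + (m/(4(m+1)))|z-x|²/φ⁴(x)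
  + ((m+4)/(4(m+1)))|z-x|³/φ⁶(x). -/
theorem phi_ratio_moment_bound (m : ℕ) (hm : 1 ≤ m) (x z : ℝ)
    (hx0 : 0 < x) (hx1 : x < 1) (hz0 : 0 ≤ z) (hz1 : z ≤ 1) :
    ∫ θ in (0:ℝ)..1, ((m : ℝ) * (1 - θ) ^ (m - 1)) *
        (Real.sqrt (x * (1 - x)) ^ m /
          Real.sqrt ((x + (z - x) * θ) * (1 - (x + (z - x) * θ))) ^ m)
      ≤ 1 + ((m : ℝ) / (2 * (m + 1))) * (|z - x| / (x * (1 - x)))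
        + ((m : ℝ) / (4 * (m + 1))) * (|z - x| ^ 2 / (x * (1 - x)) ^ 2)
        + (((m : ℝ) + 4) / (4 * (m + 1))) * (|z - x| ^ 3 / (x * (1 - x)) ^ 3) := by
  have hx1' : 0 < 1 - x := by linarith
  have hs : 0 < x * (1 - x) := mul_pos hx0 hx1'
  set d : ℝ := |z - x| with hddef
  have hd0 : 0 ≤ d := abs_nonneg _
  set r : ℝ := min 1 (d / (x * (1 - x))) with hrdef
  have hr0 : 0 ≤ r := le_min one_pos.le (div_nonneg hd0 hs.le)
  have hr1 : r ≤ 1 := min_le_left _ _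
  have hrds : r ≤ d / (x * (1 - x)) := min_le_right _ _
  have hM1 : (1:ℝ) ≤ (m:ℝ) := by exact_mod_cast hm
  have hM0 : (0:ℝ) < (m:ℝ) := by linarith
  set f : ℝ → ℝ := fun u => A0 m r * u^(m-1) + B0 m r * u^m + C0 m r * u^(m+1)
    + r^3*(m:ℝ) * u^((m:ℝ)/2 - 1) with hfdef
  have hpt : ∀ t : ℝ, 0 ≤ t → t < 1 →
      ((m:ℝ) * (1-t)^(m-1)) * (Real.sqrt (x * (1 - x)) ^ m /
        Real.sqrt ((x + (z-x)*t) * (1 - (x + (z-x)*t))) ^ m) ≤ f (1-t) := by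
    intro t ht0 ht1
    have hu : 0 < 1 - t := by linarith
    have hy0 : 0 < x + (z-x)*t := by nlinarith [mul_nonneg hz0 ht0, mul_pos hx0 hu]
    have hy1 : x + (z-x)*t < 1 := by
      nlinarith [mul_nonneg (by linarith : (0:ℝ) ≤ 1 - z) ht0, mul_pos hx1' hu]
    have hY : 0 < (x + (z-x)*t) * (1 - (x + (z-x)*t)) := mul_pos hy0 (by linarith)
    have hb1 : x * (1-x) * (1-t) ≤ (x + (z-x)*t) * (1 - (x + (z-x)*t)) := by
      nlinarith [mul_nonneg (mul_nonneg ht0 hu.le) (sq_nonneg (x-z)),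
        mul_nonneg ht0 (mul_nonneg hz0 (by linarith : (0:ℝ) ≤ 1 - z))]
    have hb2 : x * (1-x) - t*d ≤ (x + (z-x)*t) * (1 - (x + (z-x)*t)) := by
      rw [hddef]
      rcases abs_cases (z - x) with ⟨he, hc⟩ | ⟨he, hc⟩ <;> rw [he]
      · nlinarith [mul_nonneg (mul_nonneg ht0 hu.le) (sq_nonneg (x-z)),
          mul_nonneg (mul_nonneg ht0 (by linarith : (0:ℝ) ≤ z - x))
            (by linarith : (0:ℝ) ≤ 2 - x - z)]
      · nlinarith [mul_nonneg (mul_nonneg ht0 hu.le) (sq_nonneg (x-z)),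
          mul_nonneg (mul_nonneg ht0 (by linarith : (0:ℝ) ≤ x - z))
            (by linarith : (0:ℝ) ≤ x + z)]
    have hbound : x * (1-x) * (1 - r*t) ≤ (x + (z-x)*t) * (1 - (x + (z-x)*t)) := by
      rcases min_cases (1:ℝ) (d / (x * (1 - x))) with ⟨h1, h2⟩ | ⟨h1, h2⟩
      · have hre : r = 1 := by rw [hrdef, h1]
        rw [hre]; simpa using hb1
      · have hre : r = d / (x * (1 - x)) := by rw [hrdef, h1]
        have he : x * (1-x) * (1 - r*t) = x * (1-x) - t*d := by
          rw [hre]; field_simp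
        rw [he]; exact hb2
    exact weighted_bound m hm hs hY hr0 hr1 ht0 ht1 hbound
  have hp : (-1:ℝ) < (m:ℝ)/2 - 1 := by linarith
  have hfint : IntervalIntegrable (fun t : ℝ => f (1-t)) volume 0 1 := by
    have i1 : IntervalIntegrable (fun u : ℝ => r^3*(m:ℝ) * u^((m:ℝ)/2-1)) volume 0 1 :=
      (intervalIntegral.intervalIntegrable_rpow' hp).const_mul _
    have i2 := (i1.comp_sub_left 1).symm
    norm_num at i2
    have cb : Continuous (fun t : ℝ => 1 - t) := continuous_const.sub continuous_id
    have c1 : Continuous (fun t : ℝ =>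
        A0 m r * (1-t)^(m-1) + B0 m r * (1-t)^m + C0 m r * (1-t)^(m+1)) :=
      ((continuous_const.mul (cb.pow (m-1))).add (continuous_const.mul (cb.pow m))).add
        (continuous_const.mul (cb.pow (m+1)))
    have i3 := (c1.intervalIntegrable 0 1).add i2
    simpa [hfdef] using i3
  have hone : ∀ᵐ t : ℝ ∂(volume : Measure ℝ), t ≠ 1 := by
    have h0 : (volume : Measure ℝ) ({(1:ℝ)} : Set ℝ) = 0 := measure_singleton 1
    rw [MeasureTheory.ae_iff]
    simpa using h0
  have hnn : ∀ t : ℝ, t ∈ Set.Icc (0:ℝ) 1 → 0 ≤ ((m:ℝ) * (1-t)^(m-1)) *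
      (Real.sqrt (x * (1 - x)) ^ m /
        Real.sqrt ((x + (z-x)*t) * (1 - (x + (z-x)*t))) ^ m) := by
    intro t ht
    have h1t : (0:ℝ) ≤ 1 - t := by linarith [ht.2]
    positivity
  have hgint : IntervalIntegrable (fun t : ℝ => ((m:ℝ) * (1-t)^(m-1)) *
      (Real.sqrt (x * (1 - x)) ^ m /
        Real.sqrt ((x + (z-x)*t) * (1 - (x + (z-x)*t))) ^ m)) volume 0 1 := by
    apply hfint.mono_fun
    · apply Measurable.aestronglyMeasurable
      have mg : Measurable (fun t : ℝ => (x + (z-x)*t) * (1 - (x + (z-x)*t))) := by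
        have h1 : Measurable (fun t : ℝ => x + (z-x)*t) :=
          (measurable_id.const_mul (z-x)).const_add x
        exact h1.mul (h1.const_sub 1)
      have md : Measurable (fun t : ℝ =>
          Real.sqrt (x * (1 - x)) ^ m /
            Real.sqrt ((x + (z-x)*t) * (1 - (x + (z-x)*t))) ^ m) :=
        measurable_const.div ((Real.continuous_sqrt.measurable.comp mg).pow_const m)
      exact (measurable_const.mul
        ((measurable_id.const_sub 1).pow_const (m-1))).mul md
    · rw [Set.uIoc_of_le (by norm_num : (0:ℝ) ≤ 1)]
      filter_upwards [ae_restrict_mem measurableSet_Ioc, ae_restrict_of_ae hone]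
        with t ht htne
      have ht1 : t < 1 := lt_of_le_of_ne ht.2 htne
      have h1 := hpt t ht.1.le ht1
      have h2 := hnn t ⟨ht.1.le, ht.2⟩
      rw [Real.norm_eq_abs, Real.norm_eq_abs, abs_of_nonneg h2]
      exact h1.trans (le_abs_self _)
  have hIcc : (fun t : ℝ => ((m:ℝ) * (1-t)^(m-1)) *
      (Real.sqrt (x * (1 - x)) ^ m /
        Real.sqrt ((x + (z-x)*t) * (1 - (x + (z-x)*t))) ^ m))
      ≤ᵐ[volume.restrict (Set.Icc (0:ℝ) 1)] (fun t => f (1-t)) := by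
    filter_upwards [ae_restrict_mem measurableSet_Icc, ae_restrict_of_ae hone]
      with t ht htne
    exact hpt t ht.1 (lt_of_le_of_ne ht.2 htne)
  calc ∫ θ in (0:ℝ)..1, ((m : ℝ) * (1 - θ) ^ (m - 1)) *
        (Real.sqrt (x * (1 - x)) ^ m /
          Real.sqrt ((x + (z - x) * θ) * (1 - (x + (z - x) * θ))) ^ m)
      ≤ ∫ t in (0:ℝ)..1, f (1-t) :=
        intervalIntegral.integral_mono_ae_restrict (by norm_num) hgint hfint hIcc
    _ = ∫ u in (0:ℝ)..1, f u := by
        simpa using intervalIntegral.integral_comp_sub_left f 1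
    _ = A0 m r/(m:ℝ) + B0 m r/((m:ℝ)+1) + C0 m r/((m:ℝ)+2) + (r^3*(m:ℝ))/((m:ℝ)/2) :=
        Jint m hm _ _ _ _
    _ = 1 + ((m:ℝ)/(2*((m:ℝ)+1)))*r + ((m:ℝ)/(4*((m:ℝ)+1)))*r^2
        + (((m:ℝ)+4)/(4*((m:ℝ)+1)))*r^3 := Jval m hm r
    _ ≤ 1 + ((m : ℝ) / (2 * ((m:ℝ) + 1))) * (d / (x * (1 - x)))
        + ((m : ℝ) / (4 * ((m:ℝ) + 1))) * (d ^ 2 / (x * (1 - x)) ^ 2)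
        + (((m : ℝ) + 4) / (4 * ((m:ℝ) + 1))) * (d ^ 3 / (x * (1 - x)) ^ 3) := by
        have hc1 : (0:ℝ) ≤ (m:ℝ)/(2*((m:ℝ)+1)) := by positivity
        have hc2 : (0:ℝ) ≤ (m:ℝ)/(4*((m:ℝ)+1)) := by positivity
        have hc3 : (0:ℝ) ≤ ((m:ℝ)+4)/(4*((m:ℝ)+1)) := by positivity
        have e2 : d^2/(x * (1 - x))^2 = (d/(x * (1 - x)))^2 := (div_pow d _ 2).symm
        have e3 : d^3/(x * (1 - x))^3 = (d/(x * (1 - x)))^3 := (div_pow d _ 3).symm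
        rw [e2, e3]
        have p2 : r^2 ≤ (d/(x * (1 - x)))^2 := pow_le_pow_left₀ hr0 hrds 2
        have p3 : r^3 ≤ (d/(x * (1 - x)))^3 := pow_le_pow_left₀ hr0 hrds 3
        have h1 := mul_le_mul_of_nonneg_left hrds hc1
        have h2 := mul_le_mul_of_nonneg_left p2 hc2
        have h3 := mul_le_mul_of_nonneg_left p3 hc3
        linarith
end
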